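/- Let X, Y be Banach spaces and T : X → Y bounded linear. Set μ_n(T) = max{ϱ(T|C_n,S_n), ϱ(T|S_n,C_n)}. Then for all x_{−n},...,x_0,...,x_n ∈ X: (1/2π ∫_{-π}^{π} ‖Σ_{k=1}^n T x_k e^{ikt}‖² dt)^{1/2} ≤ 4 μ_n(T) · (1/2π ∫_{-π}^{π} ‖Σ_{|k|≤n} x_k e^{ikt}‖² dt)^{1/2}. -/

import Mathlib

open Real MeasureTheory intervalIntegral

namespace Stmt16Aux

noncomputable def NN {E : Type*} [NormedAddCommGroup E] (g : ℝ → E) : ℝ :=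
  Real.sqrt (∫ t in (-π)..π, ‖g t‖ ^ 2)

variable {E : Type*} [NormedAddCommGroup E]

lemma pi_ab : (-π) ≤ π := by linarith [Real.pi_pos]

lemma NN_nonneg (g : ℝ → E) : 0 ≤ NN g := Real.sqrt_nonneg _

lemma integral_sq_nonneg (g : ℝ → E) : 0 ≤ ∫ t in (-π)..π, ‖g t‖ ^ 2 :=
  intervalIntegral.integral_nonneg pi_ab (fun _ _ => sq_nonneg _)

lemma NN_sq (g : ℝ → E) : (NN g) ^ 2 = ∫ t in (-π)..π, ‖g t‖ ^ 2 :=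
  Real.sq_sqrt (integral_sq_nonneg g)

/-- Cauchy–Schwarz for interval integrals, elementary proof. -/
lemma integral_CS (a b : ℝ → ℝ) (ha : Continuous a) (hb : Continuous b) :
    (∫ t in (-π)..π, a t * b t) ≤
      Real.sqrt (∫ t in (-π)..π, (a t) ^ 2) * Real.sqrt (∫ t in (-π)..π, (b t) ^ 2) := by
  set A := ∫ t in (-π)..π, (a t) ^ 2 with hAdef
  set B := ∫ t in (-π)..π, (b t) ^ 2 with hBdef
  have hA0 : 0 ≤ A := intervalIntegral.integral_nonneg pi_ab (fun _ _ => sq_nonneg _)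
  have hB0 : 0 ≤ B := intervalIntegral.integral_nonneg pi_ab (fun _ _ => sq_nonneg _)
  have key : ∀ ε : ℝ, 0 < ε → (∫ t in (-π)..π, a t * b t) ≤ (ε * A + B / ε) / 2 := by
    intro ε hε
    have h1 : IntervalIntegrable (fun t => a t * b t) volume (-π) π :=
      (ha.mul hb).intervalIntegrable _ _
    have h2 : IntervalIntegrable (fun t => (ε * (a t) ^ 2 + (b t) ^ 2 / ε) / 2) volume (-π) π := by
      apply Continuous.intervalIntegrable
      fun_prop
    have hpt : ∀ t, a t * b t ≤ (ε * (a t) ^ 2 + (b t) ^ 2 / ε) / 2 := by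
      intro t
      rw [le_div_iff₀ (by norm_num : (0:ℝ) < 2), ← sub_nonneg]
      have h0 : ε * a t ^ 2 + b t ^ 2 / ε - a t * b t * 2 = (ε * a t - b t) ^ 2 / ε := by
        field_simp; ring
      rw [h0]; positivity
    have hmono := intervalIntegral.integral_mono_on pi_ab h1 h2 (fun t _ => hpt t)
    have heval : (∫ t in (-π)..π, (ε * (a t) ^ 2 + (b t) ^ 2 / ε) / 2)
        = (ε * A + B / ε) / 2 := by
      have i1 : IntervalIntegrable (fun t => ε * (a t) ^ 2) volume (-π) π := by
        exact (by fun_prop : Continuous _).intervalIntegrable _ _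
      have i2 : IntervalIntegrable (fun t => (b t) ^ 2 / ε) volume (-π) π := by
        exact (by fun_prop : Continuous _).intervalIntegrable _ _
      rw [intervalIntegral.integral_div, intervalIntegral.integral_add i1 i2,
        intervalIntegral.integral_div]
      have : (∫ t in (-π)..π, ε * (a t) ^ 2) = ε * A := by
        rw [hAdef]; exact intervalIntegral.integral_const_mul ε _
      rw [this]
    linarith [hmono, heval.symm.le, heval.le]
  rcases eq_or_lt_of_le hA0 with hA | hA
  · -- A = 0
    have hle : (∫ t in (-π)..π, a t * b t) ≤ 0 := by
      by_contra hc
      push_neg at hc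
      set c := ∫ t in (-π)..π, a t * b t with hcdef
      have hε : (0:ℝ) < B / c + 1 := by positivity
      have := key (B / c + 1) hε
      rw [← hA] at this
      have hBc : B / (B / c + 1) < c := by
        rw [div_lt_iff₀ hε]
        nlinarith [div_nonneg hB0 hc.le, (div_mul_cancel₀ B (ne_of_gt hc) : B / c * c = B)]
      nlinarith
    have : Real.sqrt A = 0 := by rw [← hA, Real.sqrt_zero]
    rw [this, zero_mul]; exact hle
  · rcases eq_or_lt_of_le hB0 with hB | hB
    · -- B = 0
      have hle : (∫ t in (-π)..π, a t * b t) ≤ 0 := by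
        by_contra hc
        push_neg at hc
        set c := ∫ t in (-π)..π, a t * b t with hcdef
        have hε : (0:ℝ) < c / A := by positivity
        have := key (c / A) hε
        rw [← hB] at this
        have : c ≤ (c / A * A + 0 / (c / A)) / 2 := this
        rw [zero_div, add_zero, div_mul_cancel₀ c (ne_of_gt hA)] at this
        linarith
      have : Real.sqrt B = 0 := by rw [← hB, Real.sqrt_zero]
      rw [this, mul_zero]; exact hle
    · -- A, B > 0
      have hsA : 0 < Real.sqrt A := Real.sqrt_pos.mpr hA
      have hsB : 0 < Real.sqrt B := Real.sqrt_pos.mpr hB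
      have hε : (0:ℝ) < Real.sqrt B / Real.sqrt A := by positivity
      have := key _ hε
      have heq : (Real.sqrt B / Real.sqrt A * A + B / (Real.sqrt B / Real.sqrt A)) / 2
          = Real.sqrt A * Real.sqrt B := by
        have hA' : Real.sqrt A * Real.sqrt A = A := Real.mul_self_sqrt hA0
        have hB' : Real.sqrt B * Real.sqrt B = B := Real.mul_self_sqrt hB0
        field_simp
        nlinarith [hA', hB']
      linarith [this, heq.le]


/-- Minkowski inequality for `NN`. -/
lemma NN_add_le (g h : ℝ → E) (hg : Continuous g) (hh : Continuous h) :
    NN (fun t => g t + h t) ≤ NN g + NN h := by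
  have hab := pi_ab
  set A := ∫ t in (-π)..π, ‖g t‖ ^ 2 with hAdef
  set B := ∫ t in (-π)..π, ‖h t‖ ^ 2 with hBdef
  have hA0 : 0 ≤ A := integral_sq_nonneg g
  have hB0 : 0 ≤ B := integral_sq_nonneg h
  have i1 : IntervalIntegrable (fun t => ‖g t + h t‖ ^ 2) volume (-π) π := by
    exact (by fun_prop : Continuous _).intervalIntegrable _ _
  have i2 : IntervalIntegrable (fun t => (‖g t‖ + ‖h t‖) ^ 2) volume (-π) π := by
    exact (by fun_prop : Continuous _).intervalIntegrable _ _
  have step1 : (∫ t in (-π)..π, ‖g t + h t‖ ^ 2) ≤ ∫ t in (-π)..π, (‖g t‖ + ‖h t‖) ^ 2 := by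
    apply intervalIntegral.integral_mono_on hab i1 i2
    intro t _
    have := norm_add_le (g t) (h t)
    nlinarith [norm_nonneg (g t), norm_nonneg (h t), norm_nonneg (g t + h t)]
  have step2 : (∫ t in (-π)..π, (‖g t‖ + ‖h t‖) ^ 2)
      = A + 2 * (∫ t in (-π)..π, ‖g t‖ * ‖h t‖) + B := by
    have e : ∀ t : ℝ, (‖g t‖ + ‖h t‖) ^ 2 = ‖g t‖ ^ 2 + (2 * (‖g t‖ * ‖h t‖) + ‖h t‖ ^ 2) := by
      intro t; ring
    rw [intervalIntegral.integral_congr (fun t _ => e t)]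
    have j1 : IntervalIntegrable (fun t => ‖g t‖ ^ 2) volume (-π) π := by
      exact (by fun_prop : Continuous _).intervalIntegrable _ _
    have j2 : IntervalIntegrable (fun t => 2 * (‖g t‖ * ‖h t‖) + ‖h t‖ ^ 2) volume (-π) π := by
      exact (by fun_prop : Continuous _).intervalIntegrable _ _
    have j3 : IntervalIntegrable (fun t => 2 * (‖g t‖ * ‖h t‖)) volume (-π) π := by
      exact (by fun_prop : Continuous _).intervalIntegrable _ _
    have j4 : IntervalIntegrable (fun t => ‖h t‖ ^ 2) volume (-π) π := by
      exact (by fun_prop : Continuous _).intervalIntegrable _ _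
    rw [intervalIntegral.integral_add j1 j2, intervalIntegral.integral_add j3 j4,
      intervalIntegral.integral_const_mul]
    ring
  have step3 : (∫ t in (-π)..π, ‖g t‖ * ‖h t‖) ≤ Real.sqrt A * Real.sqrt B :=
    integral_CS _ _ hg.norm hh.norm
  have step4 : (∫ t in (-π)..π, ‖g t + h t‖ ^ 2) ≤ (Real.sqrt A + Real.sqrt B) ^ 2 := by
    have hA' : Real.sqrt A ^ 2 = A := Real.sq_sqrt hA0
    have hB' : Real.sqrt B ^ 2 = B := Real.sq_sqrt hB0
    nlinarith [step1, step2, step3]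
  calc NN (fun t => g t + h t) = Real.sqrt (∫ t in (-π)..π, ‖g t + h t‖ ^ 2) := rfl
    _ ≤ Real.sqrt ((Real.sqrt A + Real.sqrt B) ^ 2) := Real.sqrt_le_sqrt step4
    _ = Real.sqrt A + Real.sqrt B := Real.sqrt_sq (by positivity)
    _ = NN g + NN h := rfl

lemma NN_smul_complex {F : Type*} [NormedAddCommGroup F] [NormedSpace ℂ F]
    (c : ℂ) (g : ℝ → F) : NN (fun t => c • g t) = ‖c‖ * NN g := by
  unfold NN
  have e : ∀ t : ℝ, ‖c • g t‖ ^ 2 = ‖c‖ ^ 2 * ‖g t‖ ^ 2 := by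
    intro t; rw [norm_smul, mul_pow]
  rw [intervalIntegral.integral_congr (fun t _ => e t), intervalIntegral.integral_const_mul,
    Real.sqrt_mul (sq_nonneg _), Real.sqrt_sq (norm_nonneg c)]

lemma NN_smul_real (r : ℝ) [NormedSpace ℝ E] (g : ℝ → E) :
    NN (fun t => r • g t) = |r| * NN g := by
  unfold NN
  have e : ∀ t : ℝ, ‖r • g t‖ ^ 2 = |r| ^ 2 * ‖g t‖ ^ 2 := by
    intro t; rw [norm_smul, mul_pow, Real.norm_eq_abs]
  rw [intervalIntegral.integral_congr (fun t _ => e t), intervalIntegral.integral_const_mul,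
    Real.sqrt_mul (sq_nonneg _), Real.sqrt_sq (abs_nonneg r)]

lemma NN_neg_comp (g : ℝ → E) : NN (fun t => g (-t)) = NN g := by
  unfold NN
  rw [show (∫ t in (-π)..π, ‖g (-t)‖ ^ 2) = ∫ t in (-π)..π, ‖g t‖ ^ 2 by
    have := intervalIntegral.integral_comp_neg (a := -π) (b := π) (fun t => ‖g t‖ ^ 2)
    simpa using this]

lemma NN_const (z : E) : NN (fun _ : ℝ => z) = Real.sqrt (2 * π) * ‖z‖ := by
  unfold NN
  rw [intervalIntegral.integral_const]
  have : (π - (-π)) = 2 * π := by ring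
  rw [this, smul_eq_mul, Real.sqrt_mul (by positivity), Real.sqrt_sq (norm_nonneg z)]

/-- pointwise domination gives NN monotonicity -/
lemma NN_mono {F : Type*} [NormedAddCommGroup F]
    (g : ℝ → E) (h : ℝ → F) (C : ℝ) (hC : 0 ≤ C)
    (hg : Continuous g) (hh : Continuous h)
    (hpt : ∀ t, ‖g t‖ ≤ C * ‖h t‖) : NN g ≤ C * NN h := by
  have i1 : IntervalIntegrable (fun t => ‖g t‖ ^ 2) volume (-π) π := by
    exact (by fun_prop : Continuous _).intervalIntegrable _ _
  have i2 : IntervalIntegrable (fun t => C ^ 2 * ‖h t‖ ^ 2) volume (-π) π := by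
    exact (by fun_prop : Continuous _).intervalIntegrable _ _
  have step : (∫ t in (-π)..π, ‖g t‖ ^ 2) ≤ C ^ 2 * ∫ t in (-π)..π, ‖h t‖ ^ 2 := by
    rw [← intervalIntegral.integral_const_mul]
    apply intervalIntegral.integral_mono_on pi_ab i1 i2
    intro t _
    have := hpt t
    nlinarith [norm_nonneg (g t), norm_nonneg (h t)]
  calc NN g ≤ Real.sqrt (C ^ 2 * ∫ t in (-π)..π, ‖h t‖ ^ 2) := Real.sqrt_le_sqrt step
    _ = C * NN h := by
        rw [Real.sqrt_mul (sq_nonneg _), Real.sqrt_sq hC]; rfl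

/-- L¹ bound by L² on the interval. -/
lemma integral_norm_le (g : ℝ → E) (hg : Continuous g) :
    (∫ t in (-π)..π, ‖g t‖) ≤ Real.sqrt (2 * π) * NN g := by
  have h := integral_CS (fun t => ‖g t‖) (fun _ => 1) hg.norm continuous_const
  simp only [mul_one, one_pow] at h
  rw [intervalIntegral.integral_const] at h
  have : (π - (-π)) • (1:ℝ) = 2 * π := by simp; ring
  rw [this] at h
  calc (∫ t in (-π)..π, ‖g t‖) ≤
      Real.sqrt (∫ t in (-π)..π, ‖g t‖ ^ 2) * Real.sqrt (2 * π) := h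
    _ = Real.sqrt (2 * π) * NN g := by rw [mul_comm]; rfl


lemma real_smul_eq {F : Type*} [NormedAddCommGroup F] [NormedSpace ℂ F] (r : ℝ) (z : F) :
    r • z = ((r : ℂ)) • z := by
  rw [← algebraMap_smul ℂ r z, Complex.coe_algebraMap]

lemma exp_I_mul (θ : ℝ) :
    Complex.exp (Complex.I * (θ : ℂ)) = ((Real.cos θ : ℂ)) + ((Real.sin θ : ℂ)) * Complex.I := by
  rw [mul_comm, Complex.exp_mul_I, ← Complex.ofReal_cos, ← Complex.ofReal_sin]

lemma exp_I_mul_neg (θ : ℝ) :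
    Complex.exp (Complex.I * ((-θ : ℝ) : ℂ)) =
      ((Real.cos θ : ℂ)) - ((Real.sin θ : ℂ)) * Complex.I := by
  rw [Complex.ofReal_neg, mul_comm, Complex.exp_mul_I, Complex.cos_neg, Complex.sin_neg,
    ← Complex.ofReal_cos, ← Complex.ofReal_sin]
  ring

lemma euler_pair {F : Type*} [NormedAddCommGroup F] [NormedSpace ℂ F] (θ : ℝ) (a b : F) :
    Real.cos θ • (a - b) + Real.sin θ • (Complex.I • (a + b))
      = Complex.exp (Complex.I * (θ : ℂ)) • a - Complex.exp (Complex.I * ((-θ : ℝ) : ℂ)) • b := by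
  rw [exp_I_mul, exp_I_mul_neg, real_smul_eq, real_smul_eq]
  module

lemma exp_pair_sum {F : Type*} [NormedAddCommGroup F] [NormedSpace ℂ F] (θ : ℝ) (a b : F) :
    Complex.exp (Complex.I * (θ : ℂ)) • a + Complex.exp (Complex.I * ((-θ : ℝ) : ℂ)) • b
        + (Real.cos θ • (a - b) + Real.sin θ • (Complex.I • (a + b)))
      = (2 : ℝ) • (Complex.exp (Complex.I * (θ : ℂ)) • a) := by
  rw [euler_pair, real_smul_eq]
  module

lemma sum_icc_int {M : Type*} [AddCommMonoid M] (n : ℕ) (φ : ℤ → M) :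
    ∑ k ∈ Finset.Icc (1 : ℤ) (n : ℤ), φ k = ∑ k ∈ Finset.Icc 1 n, φ (k : ℤ) := by
  apply Finset.sum_nbij' (f := φ) (g := fun k : ℕ => φ (k : ℤ)) (s := Finset.Icc (1 : ℤ) (n : ℤ)) (t := Finset.Icc 1 n) (i := fun a => a.toNat) (j := fun a => (a : ℤ))
  · intro a ha; simp only [Finset.mem_Icc] at *; omega
  · intro a ha; simp only [Finset.mem_Icc] at *; omega
  · intro a ha; simp only [Finset.mem_Icc] at ha; omega
  · intro a _; simp
  · intro a ha; simp only [Finset.mem_Icc] at ha; congr 1; omega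

lemma sum_icc_neg {M : Type*} [AddCommMonoid M] (n : ℕ) (φ : ℤ → M) :
    ∑ k ∈ Finset.Icc (-(n : ℤ)) (-1), φ k = ∑ k ∈ Finset.Icc 1 n, φ (-(k : ℤ)) := by
  apply Finset.sum_nbij' (f := φ) (g := fun k : ℕ => φ (-(k : ℤ))) (s := Finset.Icc (-(n : ℤ)) (-1)) (t := Finset.Icc 1 n) (i := fun a => (-a).toNat) (j := fun a => -(a : ℤ))
  · intro a ha; simp only [Finset.mem_Icc] at *; omega
  · intro a ha; simp only [Finset.mem_Icc] at *; omega
  · intro a ha; simp only [Finset.mem_Icc] at ha; omega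
  · intro a ha; simp only [Finset.mem_Icc] at ha; omega
  · intro a ha; simp only [Finset.mem_Icc] at ha; congr 1; omega

lemma sum_split {M : Type*} [AddCommMonoid M] (n : ℕ) (φ : ℤ → M) :
    ∑ k ∈ Finset.Icc (-(n : ℤ)) (n : ℤ), φ k
      = φ 0 + ∑ k ∈ Finset.Icc 1 n, (φ (k : ℤ) + φ (-(k : ℤ))) := by
  have d1 : Disjoint (Finset.Icc (-(n : ℤ)) (-1)) (Finset.Icc (0:ℤ) 0) := by
    rw [Finset.disjoint_left]; intro a ha hb
    simp only [Finset.mem_Icc] at *; omega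
  have d2 : Disjoint (Finset.Icc (-(n : ℤ)) (-1) ∪ Finset.Icc (0:ℤ) 0)
      (Finset.Icc (1:ℤ) (n : ℤ)) := by
    rw [Finset.disjoint_left]; intro a ha hb
    simp only [Finset.mem_Icc, Finset.mem_union] at *; omega
  have hdecomp : Finset.Icc (-(n : ℤ)) (n : ℤ)
      = (Finset.Icc (-(n : ℤ)) (-1) ∪ Finset.Icc (0:ℤ) 0) ∪ Finset.Icc (1:ℤ) (n : ℤ) := by
    ext a; simp only [Finset.mem_Icc, Finset.mem_union]; omega
  rw [hdecomp, Finset.sum_union d2, Finset.sum_union d1, sum_icc_neg, sum_icc_int,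
    Finset.Icc_self, Finset.sum_singleton, Finset.sum_add_distrib]
  abel


lemma NN_negfun (g : ℝ → E) : NN (fun t => -(g t)) = NN g := by
  unfold NN
  congr 1
  exact intervalIntegral.integral_congr (fun t _ => by rw [norm_neg])

lemma rc_smul_comm {F : Type*} [NormedAddCommGroup F] [NormedSpace ℂ F]
    (r : ℝ) (c : ℂ) (z : F) : r • (c • z) = c • (r • z) := by
  rw [real_smul_eq, real_smul_eq r z, smul_smul, smul_smul, mul_comm]

lemma euler_diff {F : Type*} [NormedAddCommGroup F] [NormedSpace ℂ F] (θ : ℝ) (a b : F) :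
    (Complex.exp (Complex.I * (θ : ℂ)) • a + Complex.exp (Complex.I * ((-θ : ℝ) : ℂ)) • b)
      - (Complex.exp (Complex.I * ((-θ : ℝ) : ℂ)) • a + Complex.exp (Complex.I * (θ : ℂ)) • b)
    = ((2 : ℂ) * Complex.I) • (Real.sin θ • (a - b)) := by
  rw [exp_I_mul, exp_I_mul_neg, real_smul_eq]
  module

lemma euler_sum {F : Type*} [NormedAddCommGroup F] [NormedSpace ℂ F] (θ : ℝ) (a b : F) :
    (Complex.exp (Complex.I * (θ : ℂ)) • a + Complex.exp (Complex.I * ((-θ : ℝ) : ℂ)) • b)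
      + (Complex.exp (Complex.I * ((-θ : ℝ) : ℂ)) • a + Complex.exp (Complex.I * (θ : ℂ)) • b)
    = (2 : ℝ) • (Real.cos θ • (a + b)) := by
  rw [exp_I_mul, exp_I_mul_neg, real_smul_eq, real_smul_eq]
  module

lemma NN_sin_one {F : Type*} [NormedAddCommGroup F] [NormedSpace ℝ F] (z : F) :
    NN (fun t : ℝ => Real.sin ((((1:ℕ)):ℝ) * t) • z) = Real.sqrt π * ‖z‖ := by
  unfold NN
  have e : ∀ t : ℝ, ‖Real.sin ((((1:ℕ)):ℝ) * t) • z‖ ^ 2 = (Real.sin t) ^ 2 * ‖z‖ ^ 2 := by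
    intro t
    rw [norm_smul, Real.norm_eq_abs, mul_pow, sq_abs, Nat.cast_one, one_mul]
  rw [intervalIntegral.integral_congr (fun t _ => e t), intervalIntegral.integral_mul_const,
    integral_sin_sq]
  have : (Real.sin (-π) * Real.cos (-π) - Real.sin π * Real.cos π + π - -π) / 2 = π := by
    simp [Real.sin_pi, Real.sin_neg]
  rw [this, Real.sqrt_mul Real.pi_pos.le, Real.sqrt_sq (norm_nonneg z)]

lemma NN_cos_one {F : Type*} [NormedAddCommGroup F] [NormedSpace ℝ F] (z : F) :
    NN (fun t : ℝ => Real.cos ((((1:ℕ)):ℝ) * t) • z) = Real.sqrt π * ‖z‖ := by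
  unfold NN
  have e : ∀ t : ℝ, ‖Real.cos ((((1:ℕ)):ℝ) * t) • z‖ ^ 2 = (Real.cos t) ^ 2 * ‖z‖ ^ 2 := by
    intro t
    rw [norm_smul, Real.norm_eq_abs, mul_pow, sq_abs, Nat.cast_one, one_mul]
  rw [intervalIntegral.integral_congr (fun t _ => e t), intervalIntegral.integral_mul_const,
    integral_cos_sq]
  have : (Real.cos π * Real.sin π - Real.cos (-π) * Real.sin (-π) + π - -π) / 2 = π := by
    simp [Real.sin_pi, Real.sin_neg]
  rw [this, Real.sqrt_mul Real.pi_pos.le, Real.sqrt_sq (norm_nonneg z)]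

lemma integral_exp_I_k (k : ℤ) (hk : k ≠ 0) :
    (∫ t in (-π)..π, Complex.exp (Complex.I * (((k:ℝ) * t : ℝ) : ℂ))) = 0 := by
  have hkc : ((k:ℂ)) ≠ 0 := by exact_mod_cast hk
  have hc : (Complex.I * (k:ℂ)) ≠ 0 := mul_ne_zero Complex.I_ne_zero hkc
  have hfun : ∀ t : ℝ, Complex.exp (Complex.I * (((k:ℝ) * t : ℝ) : ℂ))
      = Complex.exp ((Complex.I * (k:ℂ)) * (t:ℂ)) := by
    intro t; congr 1; push_cast; ring
  rw [intervalIntegral.integral_congr (fun t _ => hfun t), integral_exp_mul_complex hc]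
  have harg : Complex.I * (k:ℂ) * ((π:ℝ):ℂ)
      = Complex.I * (k:ℂ) * (((-π:ℝ)):ℂ) + (k:ℂ) * (2 * ((π:ℝ):ℂ) * Complex.I) := by
    push_cast; ring
  rw [harg, Complex.exp_add, Complex.exp_int_mul_two_pi_mul_I, mul_one, sub_self, zero_div]

lemma integral_exp_I_zero :
    (∫ t in (-π)..π, Complex.exp (Complex.I * ((((0:ℤ):ℝ) * t : ℝ) : ℂ))) = ((2*π : ℝ) : ℂ) := by
  have hfun : ∀ t : ℝ, Complex.exp (Complex.I * ((((0:ℤ):ℝ) * t : ℝ) : ℂ)) = (1:ℂ) := by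
    intro t; norm_num
  rw [intervalIntegral.integral_congr (fun t _ => hfun t), intervalIntegral.integral_const,
    Complex.real_smul]
  push_cast
  ring


section Identities

variable {X Y : Type*} [NormedAddCommGroup X] [NormedSpace ℂ X]
  [NormedAddCommGroup Y] [NormedSpace ℂ Y]

lemma idI (T : X →L[ℂ] Y) (n : ℕ) (x : ℤ → X) (t : ℝ) :
    (2:ℝ) • (∑ k ∈ Finset.Icc (1:ℤ) (n:ℤ),
        Complex.exp (Complex.I * (((k:ℝ) * t : ℝ) : ℂ)) • T (x k))
      = T ((∑ k ∈ Finset.Icc (-(n:ℤ)) (n:ℤ),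
            Complex.exp (Complex.I * (((k:ℝ) * t : ℝ) : ℂ)) • x k) - x 0)
        + ((∑ k ∈ Finset.Icc 1 n, Real.cos ((k:ℝ) * t) • T (x (k:ℤ) - x (-(k:ℤ))))
          + (∑ k ∈ Finset.Icc 1 n,
              Real.sin ((k:ℝ) * t) • T (Complex.I • (x (k:ℤ) + x (-(k:ℤ)))))) := by
  rw [sum_split n (fun k => Complex.exp (Complex.I * (((k:ℝ) * t : ℝ) : ℂ)) • x k)]
  have h00 : Complex.exp (Complex.I * (((((0:ℤ)):ℝ) * t : ℝ) : ℂ)) • x 0 = x 0 := by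
    simp
  rw [h00, add_sub_cancel_left, map_sum,
    sum_icc_int n (fun k => Complex.exp (Complex.I * (((k:ℝ) * t : ℝ) : ℂ)) • T (x k)),
    Finset.smul_sum, ← Finset.sum_add_distrib, ← Finset.sum_add_distrib]
  apply Finset.sum_congr rfl
  intro k _
  have ec1 : ((((k:ℤ)):ℝ) * t : ℝ) = (((k:ℕ)):ℝ) * t := by push_cast; ring
  have ec2 : ((↑(-(k:ℤ)) : ℝ) * t : ℝ) = -((((k:ℕ)):ℝ) * t) := by push_cast; ring
  rw [ec1, ec2, map_add, _root_.map_smul, _root_.map_smul, map_sub, _root_.map_smul, map_add]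
  exact (exp_pair_sum ((((k:ℕ)):ℝ) * t) (T (x (k:ℤ))) (T (x (-(k:ℤ))))).symm

lemma idII (n : ℕ) (x : ℤ → X) (t : ℝ) :
    (∑ k ∈ Finset.Icc (-(n:ℤ)) (n:ℤ),
        Complex.exp (Complex.I * (((k:ℝ) * t : ℝ) : ℂ)) • x k)
      - (∑ k ∈ Finset.Icc (-(n:ℤ)) (n:ℤ),
        Complex.exp (Complex.I * (((k:ℝ) * (-t) : ℝ) : ℂ)) • x k)
      = ((2:ℂ) * Complex.I) •
          ∑ k ∈ Finset.Icc 1 n, Real.sin ((k:ℝ) * t) • (x (k:ℤ) - x (-(k:ℤ))) := by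
  rw [sum_split n (fun k => Complex.exp (Complex.I * (((k:ℝ) * t : ℝ) : ℂ)) • x k),
    sum_split n (fun k => Complex.exp (Complex.I * (((k:ℝ) * (-t) : ℝ) : ℂ)) • x k)]
  have h00 : Complex.exp (Complex.I * (((((0:ℤ)):ℝ) * t : ℝ) : ℂ)) • x 0 = x 0 := by simp
  have h00' : Complex.exp (Complex.I * (((((0:ℤ)):ℝ) * (-t) : ℝ) : ℂ)) • x 0 = x 0 := by simp
  rw [h00, h00', add_sub_add_left_eq_sub, ← Finset.sum_sub_distrib, Finset.smul_sum]
  apply Finset.sum_congr rfl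
  intro k _
  have ec1 : ((((k:ℤ)):ℝ) * t : ℝ) = (((k:ℕ)):ℝ) * t := by push_cast; ring
  have ec2 : ((↑(-(k:ℤ)) : ℝ) * t : ℝ) = -((((k:ℕ)):ℝ) * t) := by push_cast; ring
  have ec3 : ((((k:ℤ)):ℝ) * (-t) : ℝ) = -((((k:ℕ)):ℝ) * t) := by push_cast; ring
  have ec4 : ((↑(-(k:ℤ)) : ℝ) * (-t) : ℝ) = (((k:ℕ)):ℝ) * t := by push_cast; ring
  rw [ec1, ec2, ec3, ec4]
  exact euler_diff ((((k:ℕ)):ℝ) * t) (x (k:ℤ)) (x (-(k:ℤ)))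

lemma idIII (n : ℕ) (x : ℤ → X) (t : ℝ) :
    (∑ k ∈ Finset.Icc (-(n:ℤ)) (n:ℤ),
        Complex.exp (Complex.I * (((k:ℝ) * t : ℝ) : ℂ)) • x k)
      + (∑ k ∈ Finset.Icc (-(n:ℤ)) (n:ℤ),
        Complex.exp (Complex.I * (((k:ℝ) * (-t) : ℝ) : ℂ)) • x k)
      = (2:ℝ) • x 0 + (2:ℝ) •
          ∑ k ∈ Finset.Icc 1 n, Real.cos ((k:ℝ) * t) • (x (k:ℤ) + x (-(k:ℤ))) := by
  rw [sum_split n (fun k => Complex.exp (Complex.I * (((k:ℝ) * t : ℝ) : ℂ)) • x k),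
    sum_split n (fun k => Complex.exp (Complex.I * (((k:ℝ) * (-t) : ℝ) : ℂ)) • x k)]
  have h00 : Complex.exp (Complex.I * (((((0:ℤ)):ℝ) * t : ℝ) : ℂ)) • x 0 = x 0 := by simp
  have h00' : Complex.exp (Complex.I * (((((0:ℤ)):ℝ) * (-t) : ℝ) : ℂ)) • x 0 = x 0 := by simp
  rw [h00, h00', Finset.smul_sum]
  have hmerge : ∀ (S S' : X), (x 0 + S) + (x 0 + S') = ((2:ℝ) • x 0) + (S + S') := by
    intro S S'
    rw [two_smul]
    abel
  rw [hmerge, ← Finset.sum_add_distrib]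
  congr 1
  apply Finset.sum_congr rfl
  intro k _
  have ec1 : ((((k:ℤ)):ℝ) * t : ℝ) = (((k:ℕ)):ℝ) * t := by push_cast; ring
  have ec2 : ((↑(-(k:ℤ)) : ℝ) * t : ℝ) = -((((k:ℕ)):ℝ) * t) := by push_cast; ring
  have ec3 : ((((k:ℤ)):ℝ) * (-t) : ℝ) = -((((k:ℕ)):ℝ) * t) := by push_cast; ring
  have ec4 : ((↑(-(k:ℤ)) : ℝ) * (-t) : ℝ) = (((k:ℕ)):ℝ) * t := by push_cast; ring
  rw [ec1, ec2, ec3, ec4]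
  exact euler_sum ((((k:ℕ)):ℝ) * t) (x (k:ℤ)) (x (-(k:ℤ)))

end Identities

section Main

variable {X Y : Type*} [NormedAddCommGroup X] [NormedSpace ℂ X]
  [NormedAddCommGroup Y] [NormedSpace ℂ Y]

theorem main (T : X →L[ℂ] Y) (n : ℕ) (hn : 1 ≤ n) (c₁ c₂ : ℝ) (hc₁ : 0 ≤ c₁) (hc₂ : 0 ≤ c₂)
    (h₁' : ∀ y : ℕ → X,
      NN (fun t => ∑ k ∈ Finset.Icc 1 n, Real.cos ((k:ℝ) * t) • T (y k)) ≤
        c₁ * NN (fun t => ∑ k ∈ Finset.Icc 1 n, Real.sin ((k:ℝ) * t) • y k))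
    (h₂' : ∀ y : ℕ → X,
      NN (fun t => ∑ k ∈ Finset.Icc 1 n, Real.sin ((k:ℝ) * t) • T (y k)) ≤
        c₂ * NN (fun t => ∑ k ∈ Finset.Icc 1 n, Real.cos ((k:ℝ) * t) • y k))
    (x : ℤ → X) :
    NN (fun t => ∑ k ∈ Finset.Icc (1:ℤ) (n:ℤ),
        Complex.exp (Complex.I * (((k:ℝ) * t : ℝ) : ℂ)) • T (x k))
      ≤ (4 * max c₁ c₂) * NN (fun t => ∑ k ∈ Finset.Icc (-(n:ℤ)) (n:ℤ),
        Complex.exp (Complex.I * (((k:ℝ) * t : ℝ) : ℂ)) • x k) := by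
  have hπ := Real.pi_pos
  set Φ : ℝ → Y := fun t => ∑ k ∈ Finset.Icc (1:ℤ) (n:ℤ),
      Complex.exp (Complex.I * (((k:ℝ) * t : ℝ) : ℂ)) • T (x k) with hΦ
  set f0 : ℝ → X := fun t => ∑ k ∈ Finset.Icc (-(n:ℤ)) (n:ℤ),
      Complex.exp (Complex.I * (((k:ℝ) * t : ℝ) : ℂ)) • x k with hf0
  have contexp : ∀ k : ℤ,
      Continuous (fun t : ℝ => Complex.exp (Complex.I * (((k:ℝ) * t : ℝ) : ℂ))) := by
    intro k; fun_prop
  have contΦ : Continuous Φ := by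
    rw [hΦ]; exact continuous_finset_sum _ fun k _ => (contexp k).smul continuous_const
  have contf0 : Continuous f0 := by
    rw [hf0]; exact continuous_finset_sum _ fun k _ => (contexp k).smul continuous_const
  have contW : Continuous (fun t => f0 t - x 0) := contf0.sub continuous_const
  have contcosY : ∀ z : ℕ → Y, Continuous
      (fun t => ∑ k ∈ Finset.Icc 1 n, Real.cos ((k:ℝ) * t) • z k) := by
    intro z
    exact continuous_finset_sum _ fun k _ => by fun_prop
  have contsinY : ∀ z : ℕ → Y, Continuous
      (fun t => ∑ k ∈ Finset.Icc 1 n, Real.sin ((k:ℝ) * t) • z k) := by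
    intro z
    exact continuous_finset_sum _ fun k _ => by fun_prop
  have contcosX : ∀ z : ℕ → X, Continuous
      (fun t => ∑ k ∈ Finset.Icc 1 n, Real.cos ((k:ℝ) * t) • z k) := by
    intro z
    exact continuous_finset_sum _ fun k _ => by fun_prop
  have contsinX : ∀ z : ℕ → X, Continuous
      (fun t => ∑ k ∈ Finset.Icc 1 n, Real.sin ((k:ℝ) * t) • z k) := by
    intro z
    exact continuous_finset_sum _ fun k _ => by fun_prop
  -- the operator norm bound obtained from `h₂'` at a single frequency
  have hTbound : ∀ z : X, ‖T z‖ ≤ c₂ * ‖z‖ := by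
    intro z
    have h := h₂' (fun k => if k = 1 then z else 0)
    have hmem : (1 : ℕ) ∈ Finset.Icc 1 n := Finset.mem_Icc.mpr ⟨le_refl 1, hn⟩
    have e1 : (fun t => ∑ k ∈ Finset.Icc 1 n,
        Real.sin ((k:ℝ) * t) • T (if k = 1 then z else 0))
        = fun t : ℝ => Real.sin ((((1:ℕ)):ℝ) * t) • T z := by
      funext t
      rw [Finset.sum_eq_single_of_mem 1 hmem]
      · norm_num
      · intro b _ hb; simp [hb]
    have e2 : (fun t => ∑ k ∈ Finset.Icc 1 n,
        Real.cos ((k:ℝ) * t) • (if k = 1 then z else 0))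
        = fun t : ℝ => Real.cos ((((1:ℕ)):ℝ) * t) • z := by
      funext t
      rw [Finset.sum_eq_single_of_mem 1 hmem]
      · norm_num
      · intro b _ hb; simp [hb]
    rw [e1, e2, NN_sin_one, NN_cos_one] at h
    have hs : 0 < Real.sqrt π := Real.sqrt_pos.mpr hπ
    have h' : Real.sqrt π * ‖T z‖ ≤ Real.sqrt π * (c₂ * ‖z‖) := by
      calc Real.sqrt π * ‖T z‖ ≤ c₂ * (Real.sqrt π * ‖z‖) := h
        _ = Real.sqrt π * (c₂ * ‖z‖) := by ring
    exact (mul_le_mul_iff_right₀ hs).mp h'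
  -- x₀ coefficient bound
  have hx0b : Real.sqrt (2*π) * ‖x 0‖ ≤ NN f0 := by
    rcases eq_or_ne (x 0) 0 with h0 | h0
    · rw [h0, norm_zero, mul_zero]; exact NN_nonneg f0
    · obtain ⟨g, hg1, hgx⟩ := exists_dual_vector ℂ (x 0) (norm_ne_zero_iff.mpr h0)
      have hint : (∫ t in (-π)..π, g (f0 t)) = ((2*π:ℝ):ℂ) * g (x 0) := by
        have e : ∀ t, g (f0 t) = ∑ k ∈ Finset.Icc (-(n:ℤ)) (n:ℤ),
            Complex.exp (Complex.I * (((k:ℝ) * t : ℝ) : ℂ)) * g (x k) := by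
          intro t
          rw [hf0]
          rw [map_sum]
          apply Finset.sum_congr rfl
          intro k _
          rw [_root_.map_smul, smul_eq_mul]
        rw [intervalIntegral.integral_congr (fun t _ => e t),
          intervalIntegral.integral_finset_sum
            (fun k _ => (((contexp k).mul continuous_const : Continuous fun t : ℝ =>
              Complex.exp (Complex.I * (((k:ℝ) * t : ℝ) : ℂ)) * g (x k))).intervalIntegrable _ _)]
        have hmem0 : (0:ℤ) ∈ Finset.Icc (-(n:ℤ)) (n:ℤ) := by
          rw [Finset.mem_Icc]; omega
        rw [Finset.sum_eq_single_of_mem 0 hmem0]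
        · rw [intervalIntegral.integral_mul_const, integral_exp_I_zero]
        · intro k _ hk
          rw [intervalIntegral.integral_mul_const, integral_exp_I_k k hk, zero_mul]
      have h1 : (2*π) * ‖x 0‖ = ‖(∫ t in (-π)..π, g (f0 t))‖ := by
        rw [hint, norm_mul, hgx]
        simp [abs_of_pos (show (0:ℝ) < 2*π by positivity),
          abs_of_pos hπ, abs_of_nonneg (norm_nonneg (x 0))]
      have h2 : ‖(∫ t in (-π)..π, g (f0 t))‖ ≤ ∫ t in (-π)..π, ‖f0 t‖ := by
        calc ‖(∫ t in (-π)..π, g (f0 t))‖ ≤ ∫ t in (-π)..π, ‖g (f0 t)‖ :=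
            intervalIntegral.norm_integral_le_integral_norm pi_ab
          _ ≤ ∫ t in (-π)..π, ‖f0 t‖ := by
              apply intervalIntegral.integral_mono_on pi_ab
              · exact ((g.continuous.comp contf0).norm).intervalIntegrable _ _
              · exact (contf0.norm).intervalIntegrable _ _
              · intro t _
                calc ‖g (f0 t)‖ ≤ ‖g‖ * ‖f0 t‖ := g.le_opNorm _
                  _ = ‖f0 t‖ := by rw [hg1, one_mul]
      have h3 : (∫ t in (-π)..π, ‖f0 t‖) ≤ Real.sqrt (2*π) * NN f0 :=
        integral_norm_le f0 contf0
      have hsq : Real.sqrt (2*π) * Real.sqrt (2*π) = 2*π := Real.mul_self_sqrt (by positivity)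
      have hspos : 0 < Real.sqrt (2*π) := Real.sqrt_pos.mpr (by positivity)
      have h5 : Real.sqrt (2*π) * (Real.sqrt (2*π) * ‖x 0‖) ≤ Real.sqrt (2*π) * NN f0 := by
        rw [← mul_assoc, hsq]; linarith
      exact (mul_le_mul_iff_right₀ hspos).mp h5
  -- `W := f0 - x 0`
  have hWb : NN (fun t => f0 t - x 0) ≤ 2 * NN f0 := by
    have e : (fun t => f0 t - x 0) = fun t => f0 t + (fun _ : ℝ => -(x 0)) t := by
      funext t; rw [sub_eq_add_neg]
    have h := NN_add_le f0 (fun _ : ℝ => -(x 0)) contf0 continuous_const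
    rw [← e] at h
    rw [NN_const, norm_neg] at h
    linarith
  have hTW : NN (fun t => T (f0 t - x 0)) ≤ c₂ * (2 * NN f0) := by
    have h := NN_mono (fun t => T (f0 t - x 0)) (fun t => f0 t - x 0) c₂ hc₂
      (T.continuous.comp contW) contW (fun t => hTbound _)
    calc NN (fun t => T (f0 t - x 0)) ≤ c₂ * NN (fun t => f0 t - x 0) := h
      _ ≤ c₂ * (2 * NN f0) := mul_le_mul_of_nonneg_left hWb hc₂
  -- the `sin`-side estimate
  have hSv : NN (fun t => ∑ k ∈ Finset.Icc 1 n,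
      Real.sin ((k:ℝ) * t) • (x (k:ℤ) - x (-(k:ℤ)))) ≤ NN f0 := by
    have h2I : NN (fun t => ((2:ℂ) * Complex.I) • ∑ k ∈ Finset.Icc 1 n,
        Real.sin ((k:ℝ) * t) • (x (k:ℤ) - x (-(k:ℤ))))
        = 2 * NN (fun t => ∑ k ∈ Finset.Icc 1 n,
            Real.sin ((k:ℝ) * t) • (x (k:ℤ) - x (-(k:ℤ)))) := by
      rw [NN_smul_complex]
      norm_num
    have hid : (fun t => ((2:ℂ) * Complex.I) • ∑ k ∈ Finset.Icc 1 n,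
        Real.sin ((k:ℝ) * t) • (x (k:ℤ) - x (-(k:ℤ))))
        = fun t => f0 t - f0 (-t) := by
      funext t
      exact (idII n x t).symm
    have hbound : NN (fun t => f0 t - f0 (-t)) ≤ 2 * NN f0 := by
      have e : (fun t => f0 t - f0 (-t)) = fun t => f0 t + (fun s => -(f0 (-s))) t := by
        funext t; rw [sub_eq_add_neg]
      have h := NN_add_le f0 (fun s => -(f0 (-s))) contf0
        ((contf0.comp continuous_neg).neg)
      rw [← e] at h
      rw [NN_negfun (fun s => f0 (-s)), NN_neg_comp f0] at h
      linarith
    have := h2I.symm.trans (by rw [hid])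
    linarith [hbound, this.le, this.ge]
  -- the `cos`-side estimate
  have hCu : NN (fun t => ∑ k ∈ Finset.Icc 1 n,
      Real.cos ((k:ℝ) * t) • (x (k:ℤ) + x (-(k:ℤ)))) ≤ 2 * NN f0 := by
    have h2R : NN (fun t => (2:ℝ) • ∑ k ∈ Finset.Icc 1 n,
        Real.cos ((k:ℝ) * t) • (x (k:ℤ) + x (-(k:ℤ))))
        = 2 * NN (fun t => ∑ k ∈ Finset.Icc 1 n,
            Real.cos ((k:ℝ) * t) • (x (k:ℤ) + x (-(k:ℤ)))) := by
      rw [NN_smul_real]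
      norm_num
    have hid : (fun t => (2:ℝ) • ∑ k ∈ Finset.Icc 1 n,
        Real.cos ((k:ℝ) * t) • (x (k:ℤ) + x (-(k:ℤ))))
        = fun t => (f0 t + f0 (-t)) + (fun _ : ℝ => -((2:ℝ) • x 0)) t := by
      funext t
      have h := idIII n x t
      rw [eq_comm] at h
      calc (2:ℝ) • ∑ k ∈ Finset.Icc 1 n,
          Real.cos ((k:ℝ) * t) • (x (k:ℤ) + x (-(k:ℤ)))
          = ((2:ℝ) • x 0 + (2:ℝ) • ∑ k ∈ Finset.Icc 1 n,
              Real.cos ((k:ℝ) * t) • (x (k:ℤ) + x (-(k:ℤ)))) + -((2:ℝ) • x 0) := by abel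
        _ = (f0 t + f0 (-t)) + -((2:ℝ) • x 0) := by rw [← h]
    have hb1 : NN (fun t => (f0 t + f0 (-t)) + (fun _ : ℝ => -((2:ℝ) • x 0)) t)
        ≤ NN (fun t => f0 t + f0 (-t)) + NN (fun _ : ℝ => -((2:ℝ) • x 0)) :=
      NN_add_le _ _ (contf0.add (contf0.comp continuous_neg)) continuous_const
    have hb2 : NN (fun t => f0 t + f0 (-t)) ≤ 2 * NN f0 := by
      have h := NN_add_le f0 (fun s => f0 (-s)) contf0 (contf0.comp continuous_neg)
      rw [NN_neg_comp f0] at h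
      linarith
    have hb3 : NN (fun _ : ℝ => -((2:ℝ) • x 0)) = Real.sqrt (2*π) * (2 * ‖x 0‖) := by
      rw [NN_const, norm_neg, norm_smul, Real.norm_eq_abs]
      norm_num
    have hb4 : Real.sqrt (2*π) * (2 * ‖x 0‖) ≤ 2 * NN f0 := by
      have := hx0b
      nlinarith [Real.sqrt_nonneg (2*π), norm_nonneg (x 0)]
    have hchain : 2 * NN (fun t => ∑ k ∈ Finset.Icc 1 n,
        Real.cos ((k:ℝ) * t) • (x (k:ℤ) + x (-(k:ℤ)))) ≤ 4 * NN f0 := by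
      rw [← h2R, hid]
      linarith [hb1, hb2, hb3.le, hb4]
    linarith
  -- assemble
  have hA := h₁' (fun k => x (k:ℤ) - x (-(k:ℤ)))
  have hB := h₂' (fun k => Complex.I • (x (k:ℤ) + x (-(k:ℤ))))
  have hCuI : NN (fun t => ∑ k ∈ Finset.Icc 1 n,
      Real.cos ((k:ℝ) * t) • (Complex.I • (x (k:ℤ) + x (-(k:ℤ)))))
      = NN (fun t => ∑ k ∈ Finset.Icc 1 n,
          Real.cos ((k:ℝ) * t) • (x (k:ℤ) + x (-(k:ℤ)))) := by
    have e : (fun t => ∑ k ∈ Finset.Icc 1 n,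
        Real.cos ((k:ℝ) * t) • (Complex.I • (x (k:ℤ) + x (-(k:ℤ)))))
        = fun t => Complex.I • ∑ k ∈ Finset.Icc 1 n,
            Real.cos ((k:ℝ) * t) • (x (k:ℤ) + x (-(k:ℤ))) := by
      funext t
      rw [Finset.smul_sum]
      apply Finset.sum_congr rfl
      intro k _
      rw [rc_smul_comm]
    rw [e, NN_smul_complex, Complex.norm_I, one_mul]
  have htop : 2 * NN Φ ≤ c₂ * (2 * NN f0) + (c₁ * NN f0 + c₂ * (2 * NN f0)) := by
    have hid : (fun t => (2:ℝ) • Φ t) = fun t => T (f0 t - x 0)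
        + ((∑ k ∈ Finset.Icc 1 n, Real.cos ((k:ℝ) * t) • T (x (k:ℤ) - x (-(k:ℤ))))
          + (∑ k ∈ Finset.Icc 1 n,
              Real.sin ((k:ℝ) * t) • T (Complex.I • (x (k:ℤ) + x (-(k:ℤ)))))) := by
      funext t
      exact idI T n x t
    have h2R : NN (fun t => (2:ℝ) • Φ t) = 2 * NN Φ := by
      rw [NN_smul_real]; norm_num
    have hstep1 : NN (fun t => (2:ℝ) • Φ t)
        ≤ NN (fun t => T (f0 t - x 0))
          + NN (fun t => (∑ k ∈ Finset.Icc 1 n,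
              Real.cos ((k:ℝ) * t) • T (x (k:ℤ) - x (-(k:ℤ))))
            + (∑ k ∈ Finset.Icc 1 n,
              Real.sin ((k:ℝ) * t) • T (Complex.I • (x (k:ℤ) + x (-(k:ℤ)))))) := by
      rw [hid]
      exact NN_add_le _ _ (T.continuous.comp contW)
        ((contcosY _).add (contsinY _))
    have hstep2 : NN (fun t => (∑ k ∈ Finset.Icc 1 n,
            Real.cos ((k:ℝ) * t) • T (x (k:ℤ) - x (-(k:ℤ))))
          + (∑ k ∈ Finset.Icc 1 n,
            Real.sin ((k:ℝ) * t) • T (Complex.I • (x (k:ℤ) + x (-(k:ℤ))))))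
        ≤ NN (fun t => ∑ k ∈ Finset.Icc 1 n,
            Real.cos ((k:ℝ) * t) • T (x (k:ℤ) - x (-(k:ℤ))))
          + NN (fun t => ∑ k ∈ Finset.Icc 1 n,
            Real.sin ((k:ℝ) * t) • T (Complex.I • (x (k:ℤ) + x (-(k:ℤ))))) :=
      NN_add_le _ _ (contcosY _) (contsinY _)
    have hAf : NN (fun t => ∑ k ∈ Finset.Icc 1 n,
        Real.cos ((k:ℝ) * t) • T (x (k:ℤ) - x (-(k:ℤ)))) ≤ c₁ * NN f0 := by
      calc NN (fun t => ∑ k ∈ Finset.Icc 1 n,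
          Real.cos ((k:ℝ) * t) • T (x (k:ℤ) - x (-(k:ℤ))))
          ≤ c₁ * NN (fun t => ∑ k ∈ Finset.Icc 1 n,
              Real.sin ((k:ℝ) * t) • (x (k:ℤ) - x (-(k:ℤ)))) := hA
        _ ≤ c₁ * NN f0 := mul_le_mul_of_nonneg_left hSv hc₁
    have hBf : NN (fun t => ∑ k ∈ Finset.Icc 1 n,
        Real.sin ((k:ℝ) * t) • T (Complex.I • (x (k:ℤ) + x (-(k:ℤ)))))
        ≤ c₂ * (2 * NN f0) := by
      calc NN (fun t => ∑ k ∈ Finset.Icc 1 n,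
          Real.sin ((k:ℝ) * t) • T (Complex.I • (x (k:ℤ) + x (-(k:ℤ)))))
          ≤ c₂ * NN (fun t => ∑ k ∈ Finset.Icc 1 n,
              Real.cos ((k:ℝ) * t) • (Complex.I • (x (k:ℤ) + x (-(k:ℤ))))) := hB
        _ = c₂ * NN (fun t => ∑ k ∈ Finset.Icc 1 n,
              Real.cos ((k:ℝ) * t) • (x (k:ℤ) + x (-(k:ℤ)))) := by rw [hCuI]
        _ ≤ c₂ * (2 * NN f0) := mul_le_mul_of_nonneg_left hCu hc₂
    calc 2 * NN Φ = NN (fun t => (2:ℝ) • Φ t) := h2R.symm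
      _ ≤ _ := hstep1
      _ ≤ NN (fun t => T (f0 t - x 0))
          + (NN (fun t => ∑ k ∈ Finset.Icc 1 n,
              Real.cos ((k:ℝ) * t) • T (x (k:ℤ) - x (-(k:ℤ))))
            + NN (fun t => ∑ k ∈ Finset.Icc 1 n,
              Real.sin ((k:ℝ) * t) • T (Complex.I • (x (k:ℤ) + x (-(k:ℤ)))))) := by
            linarith [hstep2]
      _ ≤ c₂ * (2 * NN f0) + (c₁ * NN f0 + c₂ * (2 * NN f0)) := by
            linarith [hTW, hAf, hBf]
  have m1 : c₁ * NN f0 ≤ max c₁ c₂ * NN f0 :=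
    mul_le_mul_of_nonneg_right (le_max_left _ _) (NN_nonneg f0)
  have m2 : c₂ * NN f0 ≤ max c₁ c₂ * NN f0 :=
    mul_le_mul_of_nonneg_right (le_max_right _ _) (NN_nonneg f0)
  have m0 : 0 ≤ max c₁ c₂ * NN f0 :=
    mul_nonneg (le_trans hc₁ (le_max_left _ _)) (NN_nonneg f0)
  have : 2 * NN Φ ≤ 8 * (max c₁ c₂ * NN f0) := by nlinarith [htop, m1, m2, m0]
  calc NN Φ ≤ 4 * (max c₁ c₂ * NN f0) := by linarith
    _ = (4 * max c₁ c₂) * NN f0 := by ring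

end Main

end Stmt16Aux

/-- Lemma 7: with `μ_n(T) = max{ϱ(T|𝒞_n,𝒮_n), ϱ(T|𝒮_n,𝒞_n)}` (given via admissible
constants `c₁, c₂`), the analytic part of a trigonometric polynomial satisfies
`‖(Tx_k)|ℰ_n‖ ≤ 4 μ_n(T) ‖(x_k)_{|k|≤n}‖`. -/
theorem stmt16 {X Y : Type*} [NormedAddCommGroup X] [NormedSpace ℂ X]
    [NormedAddCommGroup Y] [NormedSpace ℂ Y]
    (T : X →L[ℂ] Y) {n : ℕ} (c₁ c₂ : ℝ) (hc₁ : 0 ≤ c₁) (hc₂ : 0 ≤ c₂)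
    -- `c₁` is admissible for `ϱ(T|𝒞_n,𝒮_n)`:
    (h₁ : ∀ y : ℕ → X,
      Real.sqrt ((1 / π) * ∫ t in (-π)..π,
          ‖∑ k ∈ Finset.Icc 1 n, Real.cos (k * t) • T (y k)‖ ^ 2) ≤
        c₁ * Real.sqrt ((1 / π) * ∫ t in (-π)..π,
          ‖∑ k ∈ Finset.Icc 1 n, Real.sin (k * t) • y k‖ ^ 2))
    -- `c₂` is admissible for `ϱ(T|𝒮_n,𝒞_n)`:
    (h₂ : ∀ y : ℕ → X,
      Real.sqrt ((1 / π) * ∫ t in (-π)..π,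
          ‖∑ k ∈ Finset.Icc 1 n, Real.sin (k * t) • T (y k)‖ ^ 2) ≤
        c₂ * Real.sqrt ((1 / π) * ∫ t in (-π)..π,
          ‖∑ k ∈ Finset.Icc 1 n, Real.cos (k * t) • y k‖ ^ 2))
    (x : ℤ → X) :
    Real.sqrt ((1 / (2 * π)) * ∫ t in (-π)..π,
        ‖∑ k ∈ Finset.Icc (1 : ℤ) n, Complex.exp (Complex.I * ((k : ℝ) * t : ℝ)) • T (x k)‖ ^ 2) ≤
      4 * max c₁ c₂ * Real.sqrt ((1 / (2 * π)) * ∫ t in (-π)..π,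
        ‖∑ k ∈ Finset.Icc (-(n : ℤ)) n, Complex.exp (Complex.I * ((k : ℝ) * t : ℝ)) • x k‖ ^ 2) := by
  rcases Nat.eq_zero_or_pos n with h0 | hn
  · subst h0
    have he : Finset.Icc (1 : ℤ) ((0:ℕ):ℤ) = ∅ := by
      apply Finset.Icc_eq_empty
      norm_num
    have hz : Real.sqrt ((1 / (2 * π)) * ∫ t in (-π)..π,
        ‖∑ k ∈ Finset.Icc (1 : ℤ) ((0:ℕ):ℤ),
          Complex.exp (Complex.I * ((k : ℝ) * t : ℝ)) • T (x k)‖ ^ 2) = 0 := by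
      simp [he]
    refine le_trans (le_of_eq hz) ?_
    exact mul_nonneg (mul_nonneg (by norm_num) (le_trans hc₁ (le_max_left c₁ c₂)))
      (Real.sqrt_nonneg _)
  · have hred : ∀ (I₁ I₂ C : ℝ), Real.sqrt I₁ ≤ C * Real.sqrt I₂ →
        Real.sqrt ((1 / (2*π)) * I₁) ≤ C * Real.sqrt ((1 / (2*π)) * I₂) := by
      intro I₁ I₂ C h
      rw [Real.sqrt_mul (by positivity : (0:ℝ) ≤ 1/(2*π)),
        Real.sqrt_mul (by positivity : (0:ℝ) ≤ 1/(2*π))]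
      calc Real.sqrt (1/(2*π)) * Real.sqrt I₁
          ≤ Real.sqrt (1/(2*π)) * (C * Real.sqrt I₂) :=
            mul_le_mul_of_nonneg_left h (Real.sqrt_nonneg _)
        _ = C * (Real.sqrt (1/(2*π)) * Real.sqrt I₂) := by ring
    have hunscale : ∀ (a b C : ℝ), Real.sqrt ((1/π) * a) ≤ C * Real.sqrt ((1/π) * b) →
        Real.sqrt a ≤ C * Real.sqrt b := by
      intro a b C h
      rw [Real.sqrt_mul (by positivity : (0:ℝ) ≤ 1/π),
        Real.sqrt_mul (by positivity : (0:ℝ) ≤ 1/π)] at h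
      have hpos : 0 < Real.sqrt (1/π) := Real.sqrt_pos.mpr (by positivity)
      have h' : Real.sqrt (1/π) * Real.sqrt a ≤ Real.sqrt (1/π) * (C * Real.sqrt b) := by
        linarith [h, (by ring : C * (Real.sqrt (1/π) * Real.sqrt b)
          = Real.sqrt (1/π) * (C * Real.sqrt b))]
      exact (mul_le_mul_iff_right₀ hpos).mp h'
    exact hred _ _ _ (Stmt16Aux.main T n hn c₁ c₂ hc₁ hc₂
      (fun y => hunscale _ _ _ (h₁ y)) (fun y => hunscale _ _ _ (h₂ y)) x)
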